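/- There exists a universal β₀ > 0 such that the following holds whenever β ≤ β₀. Let ε ∈ (0, 10^{−2}), let A, B ⊂ {1,…,N} be disjoint, fix σ_A ∈ {−1,1}^A, and let j ∉ A∪B. Assume the couplings satisfy the Ω-condition and that a_{[A,B∪{j}]} · C_β < ε. Then for every K ∈ [−20, 20], ⟨exp(−K B_j^{[A,B]})⟩_{[A,B∪{j}]} ≤ (1 + 4ε) exp(−K ⟨B_j^{[A,B]}⟩_{[A,B∪{j}]}). -/

import Mathlib

open Finset MeasureTheory ProbabilityTheory

noncomputable section SpinGlassDefs

/-- The real spin value `±1` attached to a Boolean spin. -/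
def spinVal (b : Bool) : ℝ := if b then 1 else -1

/-- Flip the `i`-th coordinate of a spin configuration. -/
def flipAt {N : ℕ} (i : Fin N) (σ : Fin N → Bool) : Fin N → Bool :=
  Function.update σ i (!σ i)

/-- Discrete partial derivative `(∂_i f)(σ) = (f(σ) - f(σ̂_i))/2`. -/
def dd {N : ℕ} (i : Fin N) (f : (Fin N → Bool) → ℝ) (σ : Fin N → Bool) : ℝ :=
  (f σ - f (flipAt i σ)) / 2

/-- The configuration agreeing with `σA` on `A` and with `σ` elsewhere. -/
def comb {N : ℕ} (A : Finset (Fin N)) (σA σ : Fin N → Bool) : Fin N → Bool :=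
  fun i => if i ∈ A then σA i else σ i

/-- `f` depends only on the coordinates in `S`. -/
def dependsOn {N : ℕ} (f : (Fin N → Bool) → ℝ) (S : Finset (Fin N)) : Prop :=
  ∀ σ τ : Fin N → Bool, (∀ i ∈ S, σ i = τ i) → f σ = f τ

/-- The `p`-spin interaction term of the reduced Hamiltonian `H_N^{[A,B]}`:
all indices range over `Bᶜ`, spins on `A` are frozen to `σA`. -/
def hamTerm (N : ℕ) (g : (p : ℕ) → (Fin p → Fin N) → ℝ) (βp : ℕ → ℝ)
    (A B : Finset (Fin N)) (σA σ : Fin N → Bool) (p : ℕ) : ℝ :=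
  if 2 ≤ p then
    (βp p / (N : ℝ) ^ (((p : ℝ) - 1) / 2)) *
      ∑ t : Fin p → Fin N,
        (if ∀ l, t l ∉ B then g p t * ∏ l, spinVal (comb A σA σ (t l)) else 0)
  else 0

/-- The reduced Hamiltonian `H_N^{[A,B]}` (with boundary condition `σA` on `A`,
the spins of `B` removed); `H_N` itself is the case `A = B = ∅`. -/
def ham (N : ℕ) (g : (p : ℕ) → (Fin p → Fin N) → ℝ) (βp : ℕ → ℝ) (η : Fin N → ℝ)
    (A B : Finset (Fin N)) (σA σ : Fin N → Bool) : ℝ :=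
  (∑' p : ℕ, hamTerm N g βp A B σA σ p) + ∑ i ∈ Bᶜ, η i * spinVal (comb A σA σ i)

/-- Absolute convergence of all the (reduced) Hamiltonians. -/
def HamSummable (N : ℕ) (g : (p : ℕ) → (Fin p → Fin N) → ℝ) (βp : ℕ → ℝ) : Prop :=
  ∀ (A B : Finset (Fin N)) (σA σ : Fin N → Bool),
    Summable fun p : ℕ => |hamTerm N g βp A B σA σ p|

/-- Gibbs expectation `⟨f⟩_{[A,B]}` of the reduced system.  (The sum runs over full
configurations; since the integrands under consideration depend only on the coordinates
outside `A ∪ B`, the redundant multiplicity cancels between numerator and denominator.) -/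
def gibbs (N : ℕ) (g : (p : ℕ) → (Fin p → Fin N) → ℝ) (βp : ℕ → ℝ) (η : Fin N → ℝ)
    (A B : Finset (Fin N)) (σA : Fin N → Bool) (f : (Fin N → Bool) → ℝ) : ℝ :=
  (∑ σ : Fin N → Bool, f σ * Real.exp (ham N g βp η A B σA σ)) /
    ∑ σ : Fin N → Bool, Real.exp (ham N g βp η A B σA σ)

/-- Gibbs covariance `⟨f;h⟩_{[A,B]}`. -/
def gcov (N : ℕ) (g : (p : ℕ) → (Fin p → Fin N) → ℝ) (βp : ℕ → ℝ) (η : Fin N → ℝ)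
    (A B : Finset (Fin N)) (σA : Fin N → Bool) (f h : (Fin N → Bool) → ℝ) : ℝ :=
  gibbs N g βp η A B σA (fun σ => f σ * h σ) -
    gibbs N g βp η A B σA f * gibbs N g βp η A B σA h

/-- The cavity field `B_j^{[A,B]} = σ_j ∂_j H_N^{[A,B]}`. -/
def cavity (N : ℕ) (g : (p : ℕ) → (Fin p → Fin N) → ℝ) (βp : ℕ → ℝ) (η : Fin N → ℝ)
    (A B : Finset (Fin N)) (σA : Fin N → Bool) (j : Fin N) (σ : Fin N → Bool) : ℝ :=
  spinVal (σ j) * dd j (ham N g βp η A B σA) σ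

/-- The weighted Dirichlet form `D_{[A,B]}(f)`. -/
def Dform (N : ℕ) (g : (p : ℕ) → (Fin p → Fin N) → ℝ) (βp : ℕ → ℝ) (η : Fin N → ℝ)
    (A B : Finset (Fin N)) (σA : Fin N → Bool) (f : (Fin N → Bool) → ℝ) : ℝ :=
  ∑ j ∈ (A ∪ B)ᶜ, gibbs N g βp η A B σA
    (fun σ => (Real.cosh (cavity N g βp η A B σA j σ))⁻¹ ^ 2 * dd j f σ ^ 2)

/-- The inverse spectral gap `a_{[A,B]}`: supremum of `⟨f;f⟩_{[A,B]}/D_{[A,B]}(f)` over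
nonconstant functions of the free spins. -/
def gap (N : ℕ) (g : (p : ℕ) → (Fin p → Fin N) → ℝ) (βp : ℕ → ℝ) (η : Fin N → ℝ)
    (A B : Finset (Fin N)) (σA : Fin N → Bool) : ℝ :=
  sSup {r : ℝ | ∃ f : (Fin N → Bool) → ℝ, dependsOn f ((A ∪ B)ᶜ) ∧
    (∃ σ τ : Fin N → Bool, f σ ≠ f τ) ∧
    r = gcov N g βp η A B σA f f / Dform N g βp η A B σA f}

/-- `aSub k` is the maximal inverse spectral gap `a_{N-k}` over all subsystems with
`|A ∪ B| = k` and all boundary conditions `σA`. -/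
def aSub (N : ℕ) (g : (p : ℕ) → (Fin p → Fin N) → ℝ) (βp : ℕ → ℝ) (η : Fin N → ℝ)
    (k : ℕ) : ℝ :=
  sSup {r : ℝ | ∃ (A B : Finset (Fin N)) (σA : Fin N → Bool),
    Disjoint A B ∧ (A ∪ B).card = k ∧ r = gap N g βp η A B σA}

/-- Magnetization `m_j^{[A,B]} = ⟨σ_j⟩_{[A,B]}`. -/
def mag (N : ℕ) (g : (p : ℕ) → (Fin p → Fin N) → ℝ) (βp : ℕ → ℝ) (η : Fin N → ℝ)
    (A B : Finset (Fin N)) (σA : Fin N → Bool) (j : Fin N) : ℝ :=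
  gibbs N g βp η A B σA (fun σ => spinVal (σ j))

/-- `β := Σ_{p ≥ 2} √(p³ log p) β_p`. -/
def betaTot (βp : ℕ → ℝ) : ℝ :=
  ∑' p : ℕ, if 2 ≤ p then Real.sqrt ((p : ℝ) ^ 3 * Real.log p) * βp p else 0

/-- `C_β = (10³ β)² exp(10³ β)`. -/
def Cbeta (β : ℝ) : ℝ := (10 ^ 3 * β) ^ 2 * Real.exp (10 ^ 3 * β)

/-- The ℓ² → ℓ² operator norm of a real matrix. -/
def opNorm {n : Type} [Fintype n] [DecidableEq n] (M : Matrix n n ℝ) : ℝ :=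
  ‖Matrix.toEuclideanCLM (𝕜 := ℝ) M‖

/-- The matrix `(∂_i B_j^{[A,B]}(σ))_{i,j ∉ A∪B}`. -/
def cavMatrix (N : ℕ) (g : (p : ℕ) → (Fin p → Fin N) → ℝ) (βp : ℕ → ℝ) (η : Fin N → ℝ)
    (A B : Finset (Fin N)) (σA σ : Fin N → Bool) :
    Matrix {i : Fin N // i ∈ (A ∪ B)ᶜ} {i : Fin N // i ∈ (A ∪ B)ᶜ} ℝ :=
  Matrix.of fun i j => dd i.1 (cavity N g βp η A B σA j.1) σ

/-- The event/condition `Ω`: all the matrices `(∂_i B_j^{[A,B]})` have operator norm `≤ 5β`. -/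
def OmegaCond (N : ℕ) (g : (p : ℕ) → (Fin p → Fin N) → ℝ) (βp : ℕ → ℝ) (η : Fin N → ℝ) : Prop :=
  ∀ (A B : Finset (Fin N)), Disjoint A B → ∀ (σA σ : Fin N → Bool),
    opNorm (cavMatrix N g βp η A B σA σ) ≤ 5 * betaTot βp

/-- The diagonal matrix `(Λ^{[A,B]})^{1/2} = diag((1-(m_i^{[A,B]})²)^{-1/2})`. -/
def lambdaHalf (N : ℕ) (g : (p : ℕ) → (Fin p → Fin N) → ℝ) (βp : ℕ → ℝ) (η : Fin N → ℝ)
    (A B : Finset (Fin N)) (σA : Fin N → Bool) :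
    Matrix {i : Fin N // i ∈ (A ∪ B)ᶜ} {i : Fin N // i ∈ (A ∪ B)ᶜ} ℝ :=
  Matrix.diagonal fun i => Real.sqrt (1 - mag N g βp η A B σA i.1 ^ 2)⁻¹

/-- The correlation matrix `M^{[A,B]} = (⟨σ_i;σ_j⟩_{[A,B]})_{i,j ∉ A∪B}`. -/
def corrM (N : ℕ) (g : (p : ℕ) → (Fin p → Fin N) → ℝ) (βp : ℕ → ℝ) (η : Fin N → ℝ)
    (A B : Finset (Fin N)) (σA : Fin N → Bool) :
    Matrix {i : Fin N // i ∈ (A ∪ B)ᶜ} {i : Fin N // i ∈ (A ∪ B)ᶜ} ℝ :=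
  Matrix.of fun i j =>
    gcov N g βp η A B σA (fun σ => spinVal (σ i.1)) (fun σ => spinVal (σ j.1))

/-- The conjugated correlation matrix `(Λ^{[A,B]})^{1/2} M^{[A,B]} (Λ^{[A,B]})^{1/2}`. -/
def conjCorr (N : ℕ) (g : (p : ℕ) → (Fin p → Fin N) → ℝ) (βp : ℕ → ℝ) (η : Fin N → ℝ)
    (A B : Finset (Fin N)) (σA : Fin N → Bool) :
    Matrix {i : Fin N // i ∈ (A ∪ B)ᶜ} {i : Fin N // i ∈ (A ∪ B)ᶜ} ℝ :=
  lambdaHalf N g βp η A B σA * corrM N g βp η A B σA * lambdaHalf N g βp η A B σA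

/-- `h_j^{[A,B]} = (σ_j - m_j^{[A,B]}) - e^{-2σ_j B_j^{[A,B]}}(σ_j + m_j^{[A,B]})`. -/
def hfun (N : ℕ) (g : (p : ℕ) → (Fin p → Fin N) → ℝ) (βp : ℕ → ℝ) (η : Fin N → ℝ)
    (A B : Finset (Fin N)) (σA : Fin N → Bool) (j : Fin N) (σ : Fin N → Bool) : ℝ :=
  (spinVal (σ j) - mag N g βp η A B σA j) -
    Real.exp (-2 * spinVal (σ j) * cavity N g βp η A B σA j σ) *
      (spinVal (σ j) + mag N g βp η A B σA j)

/-- The matrix `S^{[A,B]}`. -/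
def Smatrix (N : ℕ) (g : (p : ℕ) → (Fin p → Fin N) → ℝ) (βp : ℕ → ℝ) (η : Fin N → ℝ)
    (A B : Finset (Fin N)) (σA : Fin N → Bool) :
    Matrix {i : Fin N // i ∈ (A ∪ B)ᶜ} {i : Fin N // i ∈ (A ∪ B)ᶜ} ℝ :=
  Matrix.of fun i j =>
    gcov N g βp η A B σA (hfun N g βp η A B σA i.1) (hfun N g βp η A B σA j.1) /
      (Real.sqrt (1 - mag N g βp η A B σA i.1 ^ 2) *
        Real.sqrt (1 - mag N g βp η A B σA j.1 ^ 2))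

/-- The couplings `g` form an i.i.d. family of standard Gaussian random variables
(indexed by all tuples of pairwise distinct indices, for all `p ≥ 2`), and vanish on
tuples with coinciding indices. -/
def IsIIDGaussianCouplings {Ω' : Type} [MeasurableSpace Ω'] (P : Measure Ω') (N : ℕ)
    (g : Ω' → (p : ℕ) → (Fin p → Fin N) → ℝ) : Prop :=
  (∀ (p : ℕ) (t : Fin p → Fin N), Measurable fun ω => g ω p t) ∧
  (∀ ω (p : ℕ) (t : Fin p → Fin N), ¬ Function.Injective t → g ω p t = 0) ∧
  (∀ (p : ℕ) (t : Fin p → Fin N), 2 ≤ p → Function.Injective t →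
    Measure.map (fun ω => g ω p t) P = gaussianReal 0 1) ∧
  iIndepFun (β := fun _ : {pt : (p : ℕ) × (Fin p → Fin N) // 2 ≤ pt.1 ∧ Function.Injective pt.2} => ℝ)
    (m := fun _ => Real.measurableSpace)
    (fun i ω => g ω i.1.1 i.1.2) P

end SpinGlassDefs


section Aux
open Finset

lemma colbound {n : Type} [Fintype n] [DecidableEq n] (M : Matrix n n ℝ) (k : n) :
    ∑ i, (M i k)^2 ≤ ‖Matrix.toEuclideanCLM (𝕜 := ℝ) M‖^2 := by
  have h := (Matrix.toEuclideanCLM (𝕜 := ℝ) M).le_opNorm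
    ((WithLp.equiv 2 (n → ℝ)).symm (Pi.single k 1))
  rw [show Matrix.toEuclideanCLM (𝕜 := ℝ) M ((WithLp.equiv 2 (n → ℝ)).symm (Pi.single k 1)) = (WithLp.equiv 2 (n → ℝ)).symm (Matrix.toLin' M (Pi.single k 1)) from rfl] at h
  have hv : ‖(WithLp.equiv 2 (n → ℝ)).symm (Pi.single k 1)‖ = 1 := by
    simp [EuclideanSpace.norm_eq, Pi.single_apply, apply_ite]
  rw [hv, mul_one] at h
  have h2 : ‖(WithLp.equiv 2 (n → ℝ)).symm (Matrix.toLin' M (Pi.single k 1))‖^2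
      = ∑ i, (M i k)^2 := by
    rw [EuclideanSpace.norm_eq, Real.sq_sqrt (by positivity)]
    congr 1; ext i
    simp [Matrix.toLin'_apply, Matrix.mulVec_single, Real.norm_eq_abs, sq_abs]
  rw [← h2]
  exact pow_le_pow_left₀ (norm_nonneg _) h 2


section EfnAPI
variable {ι : Type*} [Fintype ι] [Nonempty ι]

/-- weighted expectation -/
noncomputable def Efn (w f : ι → ℝ) : ℝ := (∑ x, f x * w x) / ∑ x, w x

lemma Zpos {w : ι → ℝ} (hw : ∀ x, 0 < w x) : 0 < ∑ x, w x :=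
  Finset.sum_pos (fun x _ => hw x) univ_nonempty

lemma Efn_const {w : ι → ℝ} (hw : ∀ x, 0 < w x) (c : ℝ) : Efn w (fun _ => c) = c := by
  unfold Efn; rw [← Finset.mul_sum]
  exact mul_div_cancel_right₀ c (Zpos hw).ne'

omit [Nonempty ι] in
lemma Efn_add (w f g : ι → ℝ) : Efn w (fun x => f x + g x) = Efn w f + Efn w g := by
  unfold Efn; rw [← add_div, ← Finset.sum_add_distrib]
  congr 1; apply Finset.sum_congr rfl; intros; ring

omit [Nonempty ι] in
lemma Efn_smul (w : ι → ℝ) (c : ℝ) (f : ι → ℝ) : Efn w (fun x => c * f x) = c * Efn w f := by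
  unfold Efn; rw [← mul_div_assoc, Finset.mul_sum]
  congr 1; apply Finset.sum_congr rfl; intros; ring

lemma Efn_mono {w : ι → ℝ} (hw : ∀ x, 0 < w x) {f g : ι → ℝ} (h : ∀ x, f x ≤ g x) :
    Efn w f ≤ Efn w g := by
  unfold Efn
  apply (div_le_div_iff_of_pos_right (Zpos hw)).mpr
  exact Finset.sum_le_sum fun x _ => mul_le_mul_of_nonneg_right (h x) (hw x).le

lemma Efn_nonneg {w : ι → ℝ} (hw : ∀ x, 0 < w x) {f : ι → ℝ} (h : ∀ x, 0 ≤ f x) :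
    0 ≤ Efn w f :=
  div_nonneg (Finset.sum_nonneg fun x _ => mul_nonneg (h x) (hw x).le) (Zpos hw).le

lemma Efn_pos {w : ι → ℝ} (hw : ∀ x, 0 < w x) {f : ι → ℝ} (h : ∀ x, 0 < f x) :
    0 < Efn w f :=
  div_pos (Finset.sum_pos (fun x _ => mul_pos (h x) (hw x)) univ_nonempty) (Zpos hw)

lemma Efn_eq_zero {w : ι → ℝ} (hw : ∀ x, 0 < w x) {f : ι → ℝ}
    (h : ∀ x, 0 ≤ f x) (h0 : Efn w f = 0) : ∀ x, f x = 0 := by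
  intro x
  have hsum : ∑ y, f y * w y = 0 := by
    unfold Efn at h0
    exact (div_eq_zero_iff.mp h0).resolve_right (Zpos hw).ne'
  have := (Finset.sum_eq_zero_iff_of_nonneg
    (fun y _ => mul_nonneg (h y) (hw y).le)).mp hsum x (mem_univ x)
  rcases mul_eq_zero.mp this with h' | h'
  · exact h'
  · exact absurd h' (hw x).ne'

lemma Efn_sum {w : ι → ℝ} (hw : ∀ x, 0 < w x) {κ : Type*} [DecidableEq κ] (T : Finset κ)
    (f : κ → ι → ℝ) :
    Efn w (fun x => ∑ i ∈ T, f i x) = ∑ i ∈ T, Efn w (f i) := by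
  induction T using Finset.induction with
  | empty => simpa using Efn_const hw 0
  | insert a T' hx ih =>
      rw [Finset.sum_insert hx, ← ih]
      rw [← Efn_add]
      congr 1; funext x; rw [Finset.sum_insert hx]

lemma Efn_var_le {w : ι → ℝ} (hw : ∀ x, 0 < w x) (f : ι → ℝ) (c : ℝ) :
    Efn w (fun x => f x * f x) - (Efn w f)^2 ≤ Efn w (fun x => (f x - c)^2) := by
  have hexp : Efn w (fun x => (f x - c)^2)
      = Efn w (fun x => f x * f x) + ((-2*c) * Efn w f + c^2) := by
    have h : (fun x => (f x - c)^2) = fun x => f x * f x + ((-2*c) * f x + c^2) := by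
      funext x; ring
    rw [h, Efn_add, Efn_add, Efn_smul, Efn_const hw]
  nlinarith [sq_nonneg (Efn w f - c)]

lemma Efn_var_nonneg {w : ι → ℝ} (hw : ∀ x, 0 < w x) (f : ι → ℝ) :
    0 ≤ Efn w (fun x => f x * f x) - (Efn w f)^2 := by
  have h1 := Efn_var_le hw f (Efn w f)
  have hexp : Efn w (fun x => (f x - Efn w f)^2)
      = Efn w (fun x => f x * f x) + ((-2*(Efn w f)) * Efn w f + (Efn w f)^2) := by
    have h : (fun x => (f x - Efn w f)^2)
        = fun x => f x * f x + ((-2*(Efn w f)) * f x + (Efn w f)^2) := by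
      funext x; ring
    rw [h, Efn_add, Efn_add, Efn_smul, Efn_const hw]
  have h3 : 0 ≤ Efn w (fun x => (f x - Efn w f)^2) :=
    Efn_nonneg hw (fun x => sq_nonneg _)
  nlinarith

end EfnAPI

lemma exp_quad_bound (v : ℝ) : Real.exp v ≤ 1 + v + v^2 * Real.exp |v| := by
  rcases le_or_gt 0 v with hv | hv
  · rw [abs_of_nonneg hv]
    have h1 := Real.add_one_le_exp (-v)
    have h2 : Real.exp (-v) * Real.exp v = 1 := by
      rw [← Real.exp_add]; simp
    have h3 := Real.exp_pos v
    nlinarith [mul_le_mul_of_nonneg_right h1 h3.le, sq_nonneg v,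
      mul_nonneg (mul_nonneg hv hv) h3.le]
  · rw [abs_of_neg hv]
    have h1 := Real.add_one_le_exp v
    have h2 : Real.exp (-v) * Real.exp v = 1 := by
      rw [← Real.exp_add]; simp
    have h3 := Real.exp_pos v
    have h4 : (1:ℝ) ≤ Real.exp (-v) := Real.one_le_exp (by linarith)
    -- e^v ≤ 1 + v + v², since e^v(1-v) ≤ e^v e^{-v} = 1? no:
    -- v < 0: want e^v ≤ 1+v+v²e^{-v}. Since e^v ≤ 1/(1-v) (from (1-v)e^v ≤ 1, 1-v>0):
    -- 1/(1-v) ≤ 1+v+v² ⟺ 1 ≤ (1+v+v²)(1-v) = 1-v³ ✓ since v<0.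
    have h1' := Real.add_one_le_exp (-v)
    have h5 : Real.exp v * (1 - v) ≤ 1 := by nlinarith [mul_le_mul_of_nonneg_right h1' h3.le]
    have h6 : (0:ℝ) < 1 - v := by linarith
    nlinarith [mul_pos (mul_pos (neg_pos.mpr hv) (neg_pos.mpr hv)) h3,
      mul_nonneg (mul_nonneg (sq_nonneg v) h3.le) h6.le, sq_nonneg v,
      mul_le_mul_of_nonneg_left h4 (sq_nonneg v)]

lemma core {ι : Type*} [Fintype ι] [Nonempty ι] (w X : ι → ℝ) (hw : ∀ x, 0 < w x)
    (ε : ℝ) (hε : 0 < ε) (hε' : ε < 1/100)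
    (hvar : ∀ s : ℝ, 0 < s → s ≤ 1 →
      Efn w (fun x => Real.exp (-(s * X x))) - (Efn w (fun x => Real.exp (-(s/2 * X x))))^2
        ≤ ε/100 * s^2 * Efn w (fun x => Real.exp (-(s * X x)))) :
    Efn w (fun x => Real.exp (-(X x))) ≤ (1 + 4*ε) * Real.exp (-(Efn w X)) := by
  set G : ℝ → ℝ := fun s => Efn w (fun x => Real.exp (-(s * X x))) with hG
  have hGpos : ∀ s, 0 < G s := fun s => Efn_pos hw (fun x => Real.exp_pos _)
  -- single step
  have step : ∀ s : ℝ, 0 < s → s ≤ 1 → G s ≤ Real.exp (ε/50 * s^2) * (G (s/2))^2 := by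
    intro s hs hs1
    have h1 := hvar s hs hs1
    have hu : ε/100 * s^2 ≤ 1/10000 := by nlinarith
    have hu0 : 0 ≤ ε/100 * s^2 := by positivity
    have h2 : G s * (1 - ε/100 * s^2) ≤ (G (s/2))^2 := by
      have : (G (s/2))^2 = (Efn w (fun x => Real.exp (-(s/2 * X x))))^2 := rfl
      nlinarith [hGpos s]
    have h3 : G s ≤ (G (s/2))^2 * (1 + 2*(ε/100 * s^2)) := by
      nlinarith [mul_le_mul_of_nonneg_right h2
          (show (0:ℝ) ≤ 1 + 2*(ε/100*s^2) by positivity),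
        mul_nonneg (mul_nonneg (hGpos s).le hu0)
          (show (0:ℝ) ≤ 1 - 2*(ε/100*s^2) by linarith)]
    have h4 : 1 + 2*(ε/100 * s^2) ≤ Real.exp (ε/50 * s^2) := by
      have := Real.add_one_le_exp (ε/50 * s^2)
      nlinarith
    calc G s ≤ (G (s/2))^2 * (1 + 2*(ε/100 * s^2)) := h3
      _ ≤ (G (s/2))^2 * Real.exp (ε/50 * s^2) :=
          mul_le_mul_of_nonneg_left h4 (sq_nonneg _)
      _ = Real.exp (ε/50 * s^2) * (G (s/2))^2 := mul_comm _ _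
  -- iteration
  have iter : ∀ n : ℕ, G 1 ≤ Real.exp (ε/50 * (2 - 2*(1/2)^n)) * (G ((1/2)^n))^(2^n) := by
    intro n
    induction n with
    | zero => simp
    | succ n ih =>
        have hsn : (0:ℝ) < (1/2)^n := by positivity
        have hsn1 : ((1:ℝ)/2)^n ≤ 1 := pow_le_one₀ (by norm_num) (by norm_num)
        have h2n : ((1:ℝ)/2)^n * 2^n = 1 := by
          rw [← mul_pow]; norm_num
        have hsq : (((1:ℝ)/2)^n)^2 * 2^n = (1/2)^n := by
          rw [pow_two, mul_assoc, h2n, mul_one]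
        have hstep := step ((1/2)^n) hsn hsn1
        have hhalf : ((1:ℝ)/2)^n / 2 = (1/2)^(n+1) := by rw [pow_succ]; ring
        rw [hhalf] at hstep
        have hpow : (G ((1/2)^n))^(2^n)
            ≤ (Real.exp (ε/50 * ((1/2)^n)^2) * (G ((1/2)^(n+1)))^2)^(2^n) :=
          pow_le_pow_left₀ (hGpos _).le hstep _
        have hexp : (Real.exp (ε/50 * ((1/2)^n)^2) * (G ((1/2)^(n+1)))^2)^(2^n)
            = Real.exp (ε/50 * ((1/2)^n)^2 * 2^n) * (G ((1/2)^(n+1)))^(2^(n+1)) := by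
          rw [mul_pow, ← Real.exp_nat_mul, ← pow_mul (G ((1/2)^(n+1))) 2 (2^n),
            show 2*2^n = 2^n*2 from Nat.mul_comm 2 (2^n), ← pow_succ]
          congr 1
          push_cast; ring
        rw [hexp] at hpow
        calc G 1 ≤ Real.exp (ε/50 * (2 - 2*(1/2)^n)) * (G ((1/2)^n))^(2^n) := ih
          _ ≤ Real.exp (ε/50 * (2 - 2*(1/2)^n)) *
              (Real.exp (ε/50 * ((1/2)^n)^2 * 2^n) * (G ((1/2)^(n+1)))^(2^(n+1))) :=
            mul_le_mul_of_nonneg_left hpow (Real.exp_pos _).le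
          _ = Real.exp (ε/50 * (2 - 2*(1/2)^n) + ε/50 * ((1/2)^n)^2 * 2^n) *
              (G ((1/2)^(n+1)))^(2^(n+1)) := by
            rw [← mul_assoc, ← Real.exp_add]
          _ ≤ Real.exp (ε/50 * (2 - 2*(1/2)^(n+1))) * (G ((1/2)^(n+1)))^(2^(n+1)) := by
            apply mul_le_mul_of_nonneg_right _ (pow_nonneg (hGpos _).le _)
            apply Real.exp_le_exp.mpr
            apply le_of_eq
            have hp1 : ((1:ℝ)/2)^(n+1) = (1/2)^n/2 := by rw [pow_succ]; ring
            rw [hp1]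
            linear_combination (ε/50) * hsq
  -- small-s upper bound
  set M := ∑ x, |X x| with hMdef
  have hM : ∀ x, |X x| ≤ M :=
    fun x => Finset.single_le_sum (f := fun y => |X y|) (fun y _ => abs_nonneg _) (mem_univ x)
  have hM0 : 0 ≤ M := le_trans (abs_nonneg _) (hM (Classical.arbitrary ι))
  set C := M^2 * Real.exp M with hCdef
  have hC0 : 0 ≤ C := by positivity
  have smalls : ∀ s : ℝ, 0 < s → s ≤ 1 → G s ≤ Real.exp (-(s * Efn w X) + s^2*C) := by
    intro s hs hs1
    have hpt : ∀ x, Real.exp (-(s * X x)) ≤ 1 + (-s) * X x + s^2 * C := by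
      intro x
      have h := exp_quad_bound (-(s * X x))
      have habs : |(-(s * X x))| = s * |X x| := by rw [abs_neg, abs_mul, abs_of_pos hs]
      have h2 : (-(s * X x))^2 * Real.exp |(-(s * X x))| ≤ s^2 * C := by
        rw [habs, hCdef]
        have he : Real.exp (s * |X x|) ≤ Real.exp M :=
          Real.exp_le_exp.mpr (by nlinarith [hM x, abs_nonneg (X x)])
        have hx2 : (X x)^2 ≤ M^2 := by
          have := hM x
          nlinarith [abs_nonneg (X x), sq_abs (X x)]
        have hsq : (-(s*X x))^2 = s^2 * (X x)^2 := by ring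
        rw [hsq]
        have h1 : s^2 * (X x)^2 ≤ s^2 * M^2 :=
          mul_le_mul_of_nonneg_left hx2 (by positivity)
        calc s^2*(X x)^2 * Real.exp (s*|X x|) ≤ s^2*M^2 * Real.exp M := by
              apply mul_le_mul h1 he (Real.exp_pos _).le (by positivity)
          _ = s^2 * (M^2 * Real.exp M) := by ring
      calc Real.exp (-(s * X x)) ≤ 1 + (-(s * X x)) + (-(s * X x))^2 * Real.exp |(-(s*X x))| := h
        _ ≤ 1 + (-s) * X x + s^2 * C := by rw [neg_mul]; linarith
    calc G s ≤ Efn w (fun x => 1 + (-s) * X x + s^2*C) := Efn_mono hw hpt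
      _ = 1 + (-s) * Efn w X + s^2*C := by
          have e1 : Efn w (fun x => 1 + (-s) * X x + s^2*C)
              = Efn w (fun x => (1 + s^2*C) + (-s) * X x) := by
            congr 1; funext x; ring
          rw [e1, Efn_add, Efn_smul, Efn_const hw]; ring
      _ ≤ Real.exp (-(s * Efn w X) + s^2*C) := by
          have := Real.add_one_le_exp (-(s * Efn w X) + s^2*C)
          linarith
  -- choose n
  obtain ⟨n, hn⟩ : ∃ n : ℕ, (1/2:ℝ)^n * C ≤ ε := by
    obtain ⟨n, hn⟩ := exists_pow_lt_of_lt_one (show (0:ℝ) < ε/(C+1) by positivity)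
      (show (1:ℝ)/2 < 1 by norm_num)
    refine ⟨n, ?_⟩
    have h1 : (1/2:ℝ)^n * (C+1) < ε := (lt_div_iff₀ (by positivity)).mp hn
    nlinarith [pow_nonneg (show (0:ℝ) ≤ 1/2 by norm_num) n]
  -- assemble
  have hsn : (0:ℝ) < (1/2)^n := by positivity
  have h2n : ((1:ℝ)/2)^n * 2^n = 1 := by rw [← mul_pow]; norm_num
  have hsq : (((1:ℝ)/2)^n)^2 * 2^n = (1/2)^n := by
    rw [pow_two, mul_assoc, h2n, mul_one]
  have h2 := smalls ((1/2)^n) hsn (pow_le_one₀ (by norm_num) (by norm_num))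
  have h3 : (G ((1/2)^n))^(2^n) ≤ Real.exp (-(Efn w X) + (1/2)^n * C) := by
    calc (G ((1/2)^n))^(2^n)
        ≤ (Real.exp (-((1/2)^n * Efn w X) + ((1/2)^n)^2*C))^(2^n) :=
          pow_le_pow_left₀ (hGpos _).le h2 _
      _ = Real.exp ((2^n : ℕ) * (-((1/2)^n * Efn w X) + ((1/2)^n)^2*C)) := by
          rw [← Real.exp_nat_mul]
      _ = Real.exp (-(Efn w X) + (1/2)^n * C) := by
          congr 1
          push_cast
          linear_combination (-(Efn w X)) * h2n + C * hsq
  have h4 : Real.exp (ε/50 * (2 - 2*(1/2)^n)) ≤ Real.exp (ε/25) := by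
    apply Real.exp_le_exp.mpr
    nlinarith [hsn]
  have h5 : Real.exp (-(Efn w X) + (1/2)^n * C) ≤ Real.exp (-(Efn w X) + ε) := by
    apply Real.exp_le_exp.mpr; linarith
  have h6 : G 1 ≤ Real.exp (ε/25) * Real.exp (-(Efn w X) + ε) := by
    calc G 1 ≤ Real.exp (ε/50 * (2 - 2*(1/2)^n)) * (G ((1/2)^n))^(2^n) := iter n
      _ ≤ Real.exp (ε/25) * Real.exp (-(Efn w X) + ε) :=
        mul_le_mul h4 (h3.trans h5) (pow_nonneg (hGpos _).le _) (Real.exp_pos _).le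
  have hnum : Real.exp (ε/25) * Real.exp ε ≤ 1 + 4*ε := by
    rw [← Real.exp_add]
    have ht0 : 0 ≤ ε/25 + ε := by linarith
    have ht : ε/25 + ε ≤ 26/2500 := by linarith
    have hq := exp_quad_bound (ε/25 + ε)
    have het : Real.exp |ε/25 + ε| ≤ 3 := by
      rw [abs_of_nonneg ht0]
      calc Real.exp (ε/25 + ε) ≤ Real.exp 1 := Real.exp_le_exp.mpr (by linarith)
        _ ≤ 3 := by linarith [Real.exp_one_lt_d9.le]
    nlinarith [sq_nonneg (ε/25 + ε), Real.exp_pos (|ε/25 + ε|)]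
  have hgoal : G 1 ≤ (1 + 4*ε) * Real.exp (-(Efn w X)) := by
    calc G 1 ≤ Real.exp (ε/25) * Real.exp (-(Efn w X) + ε) := h6
      _ = (Real.exp (ε/25) * Real.exp ε) * Real.exp (-(Efn w X)) := by
          rw [← Real.exp_add, ← Real.exp_add, ← Real.exp_add]; congr 1; ring
      _ ≤ (1 + 4*ε) * Real.exp (-(Efn w X)) :=
          mul_le_mul_of_nonneg_right hnum (Real.exp_pos _).le
  have hG1 : G 1 = Efn w (fun x => Real.exp (-(X x))) := by
    simp only [hG, one_mul]
  rw [← hG1]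
  exact hgoal


end Aux

section SpinLemmas
open Finset

lemma bool_ne_iff {a b : Bool} (h : a ≠ b) : a = !b := by
  cases a <;> cases b <;> simp_all

lemma flipAt_flipAt {N : ℕ} (i : Fin N) (σ : Fin N → Bool) : flipAt i (flipAt i σ) = σ := by
  funext k
  unfold flipAt
  rcases eq_or_ne k i with rfl | h
  · simp
  · simp [Function.update_apply, h]

lemma flipAt_self {N : ℕ} (i : Fin N) (σ : Fin N → Bool) : flipAt i σ i = !σ i := by
  simp [flipAt]

lemma flipAt_ne {N : ℕ} (i k : Fin N) (σ : Fin N → Bool) (h : k ≠ i) : flipAt i σ k = σ k := by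
  simp [flipAt, Function.update_apply, h]

lemma spinVal_not (b : Bool) : spinVal (!b) = -spinVal b := by
  cases b <;> simp [spinVal]

lemma ham_congr (N : ℕ) (g : (p : ℕ) → (Fin p → Fin N) → ℝ) (βp : ℕ → ℝ) (η : Fin N → ℝ)
    (A B : Finset (Fin N)) (σA : Fin N → Bool) {σ τ : Fin N → Bool}
    (h : ∀ i, i ∉ A → i ∉ B → σ i = τ i) :
    ham N g βp η A B σA σ = ham N g βp η A B σA τ := by
  have hcomb : ∀ i, i ∉ B → comb A σA σ i = comb A σA τ i := by
    intro i hi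
    unfold comb
    by_cases hA : i ∈ A
    · simp [hA]
    · simp [hA, h i hA hi]
  unfold ham
  congr 1
  · apply tsum_congr; intro p
    unfold hamTerm
    split
    · congr 1
      apply Finset.sum_congr rfl
      intro t _
      by_cases ht : ∀ l, t l ∉ B
      · rw [if_pos ht, if_pos ht]
        congr 1
        exact Finset.prod_congr rfl fun l _ => by rw [hcomb _ (ht l)]
      · rw [if_neg ht, if_neg ht]
    · rfl
  · exact Finset.sum_congr rfl fun i hi => by rw [hcomb i (Finset.mem_compl.mp hi)]

lemma cavity_flip_self (N : ℕ) (g : (p : ℕ) → (Fin p → Fin N) → ℝ) (βp : ℕ → ℝ)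
    (η : Fin N → ℝ) (A B : Finset (Fin N)) (σA : Fin N → Bool) (j : Fin N)
    (σ : Fin N → Bool) :
    cavity N g βp η A B σA j (flipAt j σ) = cavity N g βp η A B σA j σ := by
  unfold cavity dd
  rw [flipAt_flipAt, flipAt_self, spinVal_not]
  ring

lemma cavity_congr (N : ℕ) (g : (p : ℕ) → (Fin p → Fin N) → ℝ) (βp : ℕ → ℝ)
    (η : Fin N → ℝ) (A B : Finset (Fin N)) (σA : Fin N → Bool) (j : Fin N)
    {σ τ : Fin N → Bool} (h : ∀ i, i ∉ A → i ∉ B → i ≠ j → σ i = τ i) :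
    cavity N g βp η A B σA j σ = cavity N g βp η A B σA j τ := by
  set σ' : Fin N → Bool := Function.update σ j (τ j) with hσ'
  have h1 : cavity N g βp η A B σA j σ = cavity N g βp η A B σA j σ' := by
    rcases eq_or_ne (σ j) (τ j) with he | hne
    · rw [show σ' = σ by rw [hσ', ← he, Function.update_eq_self]]
    · have : σ' = flipAt j σ := by
        funext k
        rcases eq_or_ne k j with rfl | hk
        · simp only [hσ', Function.update_self, flipAt_self]
          exact bool_ne_iff (fun hh => hne hh.symm)
        · simp [hσ', flipAt_ne _ _ _ hk, Function.update_apply, hk]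
      rw [this, cavity_flip_self]
  rw [h1]
  unfold cavity
  have hjj : σ' j = τ j := Function.update_self j (τ j) σ
  rw [show spinVal (σ' j) = spinVal (τ j) by rw [hjj]]
  congr 1
  unfold dd
  have e1 : ham N g βp η A B σA σ' = ham N g βp η A B σA τ := by
    apply ham_congr
    intro i hiA hiB
    rcases eq_or_ne i j with rfl | hij
    · exact hjj
    · rw [hσ', Function.update_apply, if_neg hij]
      exact h i hiA hiB hij
  have e2 : ham N g βp η A B σA (flipAt j σ') = ham N g βp η A B σA (flipAt j τ) := by
    apply ham_congr
    intro i hiA hiB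
    rcases eq_or_ne i j with rfl | hij
    · rw [flipAt_self, flipAt_self, hjj]
    · rw [flipAt_ne _ _ _ hij, flipAt_ne _ _ _ hij, hσ', Function.update_apply, if_neg hij]
      exact h i hiA hiB hij
  rw [e1, e2]

/-- telescoping bound over a finset of coordinates -/
lemma tele {N : ℕ} (f : (Fin N → Bool) → ℝ) (S : Finset (Fin N)) (b : Fin N → ℝ)
    (hb : ∀ i ∈ S, ∀ ρ, |dd i f ρ| ≤ b i) :
    ∀ T : Finset (Fin N), T ⊆ S → ∀ σ τ : Fin N → Bool,
      (∀ i, i ∉ T → σ i = τ i) → |f σ - f τ| ≤ ∑ i ∈ T, 2 * b i := by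
  intro T
  induction T using Finset.induction with
  | empty =>
      intro _ σ τ hagree
      have : σ = τ := funext fun i => hagree i (Finset.notMem_empty i)
      simp [this]
  | @insert a T' hx ih =>
      intro hsub σ τ hagree
      have haS : a ∈ S := hsub (Finset.mem_insert_self a T')
      have hba : 0 ≤ b a := le_trans (abs_nonneg _) (hb a haS σ)
      set τ' : Fin N → Bool := Function.update τ a (σ a) with hτ'
      have hagree' : ∀ i, i ∉ T' → σ i = τ' i := by
        intro i hi
        rcases eq_or_ne i a with rfl | hia
        · rw [hτ', Function.update_self]
        · rw [hτ', Function.update_apply, if_neg hia]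
          exact hagree i (by simp [Finset.mem_insert, hia, hi])
      have h1 : |f σ - f τ'| ≤ ∑ i ∈ T', 2 * b i :=
        ih (fun i hi => hsub (Finset.mem_insert_of_mem hi)) σ τ' hagree'
      have h2 : |f τ' - f τ| ≤ 2 * b a := by
        rcases eq_or_ne (σ a) (τ a) with he | hne
        · rw [show τ' = τ by rw [hτ', he, Function.update_eq_self]]
          simp only [sub_self, abs_zero]
          positivity
        · have hflip : τ' = flipAt a τ := by
            funext k
            rcases eq_or_ne k a with rfl | hk
            · simp only [hτ', Function.update_self, flipAt_self]
              exact bool_ne_iff hne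
            · rw [hτ', Function.update_apply, if_neg hk, flipAt_ne _ _ _ hk]
          have : f τ' - f τ = -(2 * dd a f τ) := by
            rw [hflip]; unfold dd; ring
          rw [this, abs_neg, abs_mul, abs_two]
          exact mul_le_mul_of_nonneg_left (hb a haS τ) (by norm_num)
      calc |f σ - f τ| = |(f σ - f τ') + (f τ' - f τ)| := by ring_nf
        _ ≤ |f σ - f τ'| + |f τ' - f τ| := abs_add_le _ _
        _ ≤ (∑ i ∈ T', 2 * b i) + 2 * b a := add_le_add h1 h2
        _ = ∑ i ∈ insert a T', 2 * b i := by rw [Finset.sum_insert hx]; ring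

lemma one_sub_exp_abs (u : ℝ) : |1 - Real.exp u| ≤ |u| * Real.exp |u| := by
  rcases le_or_gt 0 u with hu | hu
  · rw [abs_of_nonneg hu, abs_sub_comm, abs_of_nonneg (by linarith [Real.one_le_exp hu])]
    have h1 := Real.add_one_le_exp (-u)
    have h2 : Real.exp (-u) * Real.exp u = 1 := by rw [← Real.exp_add]; simp
    nlinarith [Real.exp_pos u]
  · have h1 := Real.add_one_le_exp u
    have he1 : Real.exp u < 1 := Real.exp_lt_one_iff.mpr hu
    rw [abs_of_neg hu, abs_of_nonneg (by linarith : (0:ℝ) ≤ 1 - Real.exp u)]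
    have h3 : 1 ≤ Real.exp (-u) := Real.one_le_exp (by linarith)
    nlinarith

lemma betaTot_nonneg {βp : ℕ → ℝ} (hβp : ∀ p, 0 ≤ βp p) : 0 ≤ betaTot βp := by
  apply tsum_nonneg
  intro p
  split
  · exact mul_nonneg (Real.sqrt_nonneg _) (hβp p)
  · exact le_refl 0
end SpinLemmas

set_option maxHeartbeats 1000000 in
theorem exp_cavity_bound :
    ∃ β₀ > (0 : ℝ), ∀
    (N : ℕ) (g : (p : ℕ) → (Fin p → Fin N) → ℝ) (βp : ℕ → ℝ) (η : Fin N → ℝ)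
    (hβp : ∀ p, 0 ≤ βp p)
    (hβsum : Summable fun p : ℕ =>
      if 2 ≤ p then Real.sqrt ((p : ℝ) ^ 3 * Real.log p) * βp p else 0)
    (hg0 : ∀ (p : ℕ) (t : Fin p → Fin N), ¬ Function.Injective t → g p t = 0)
    (hH : HamSummable N g βp)
    (hβ : betaTot βp ≤ β₀) (ε : ℝ) (hε : ε ∈ Set.Ioo (0 : ℝ) (1 / 100))
    (A B : Finset (Fin N)) (hAB : Disjoint A B) (σA : Fin N → Bool)
    (j : Fin N) (hj : j ∉ A ∪ B)
    (hΩ : OmegaCond N g βp η)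
    (hgap : gap N g βp η A (B ∪ {j}) σA * Cbeta (betaTot βp) < ε)
    (K : ℝ) (hK : K ∈ Set.Icc (-20 : ℝ) 20),
    gibbs N g βp η A (B ∪ {j}) σA
        (fun σ => Real.exp (-K * cavity N g βp η A B σA j σ)) ≤
      (1 + 4 * ε) *
        Real.exp (-K * gibbs N g βp η A (B ∪ {j}) σA (cavity N g βp η A B σA j)) := by
  classical
  refine ⟨1, one_pos, ?_⟩
  intro N g βp η hβp hβsum hg0 hH hβ ε hε A B hAB σA j hj hΩ hgap K hK
  set β := betaTot βp with hβdef
  have hβ0 : 0 ≤ β := betaTot_nonneg hβp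
  have hjA : j ∉ A := fun h => hj (Finset.mem_union.mpr (Or.inl h))
  have hjB : j ∉ B := fun h => hj (Finset.mem_union.mpr (Or.inr h))
  set S : Finset (Fin N) := (A ∪ (B ∪ {j}))ᶜ with hSdef
  set w : (Fin N → Bool) → ℝ := fun σ => Real.exp (ham N g βp η A (B ∪ {j}) σA σ) with hwdef
  have hwpos : ∀ σ, 0 < w σ := fun σ => Real.exp_pos _
  set Bf : (Fin N → Bool) → ℝ := cavity N g βp η A B σA j with hBfdef
  set X : (Fin N → Bool) → ℝ := fun σ => K * Bf σ with hXdef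
  have hgibbs : ∀ f, gibbs N g βp η A (B ∪ {j}) σA f = Efn w f := fun f => rfl
  -- dependence of Bf on S only
  have hdepBf : ∀ σ τ : Fin N → Bool, (∀ i ∈ S, σ i = τ i) → Bf σ = Bf τ := by
    intro σ τ h
    apply cavity_congr
    intro i hiA hiB hij
    apply h
    rw [hSdef]
    simp [Finset.mem_compl, Finset.mem_union, hiA, hiB, hij]
  have hdepX : ∀ σ τ : Fin N → Bool, (∀ i ∈ S, σ i = τ i) → X σ = X τ := by
    intro σ τ h; simp only [hXdef]; rw [hdepBf σ τ h]
  -- column bound from the Ω-condition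
  have hcolAB : ∀ σ : Fin N → Bool, ∑ i ∈ (A ∪ B)ᶜ, (dd i Bf σ)^2 ≤ (5*β)^2 := by
    intro σ
    have hop := hΩ A B hAB σA σ
    have hcol := colbound (cavMatrix N g βp η A B σA σ) ⟨j, Finset.mem_compl.mpr hj⟩
    have h0 : opNorm (cavMatrix N g βp η A B σA σ)
        = ‖Matrix.toEuclideanCLM (𝕜 := ℝ) (cavMatrix N g βp η A B σA σ)‖ := rfl
    rw [h0] at hop
    have h2 : ‖Matrix.toEuclideanCLM (𝕜 := ℝ) (cavMatrix N g βp η A B σA σ)‖^2 ≤ (5*β)^2 :=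
      pow_le_pow_left₀ (norm_nonneg _) hop 2
    have h3 : ∑ i : {i : Fin N // i ∈ (A ∪ B)ᶜ},
        (cavMatrix N g βp η A B σA σ i ⟨j, Finset.mem_compl.mpr hj⟩)^2
        = ∑ i ∈ (A ∪ B)ᶜ, (dd i Bf σ)^2 :=
      Finset.sum_coe_sort ((A ∪ B)ᶜ) (fun i => (dd i Bf σ)^2)
    rw [← h3]
    exact hcol.trans h2
  have hSsub : S ⊆ (A ∪ B)ᶜ := by
    intro i hi
    rw [hSdef] at hi
    simp only [Finset.mem_compl, Finset.mem_union, Finset.mem_singleton] at hi ⊢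
    tauto
  have hcolS : ∀ σ : Fin N → Bool, ∑ i ∈ S, (dd i Bf σ)^2 ≤ (5*β)^2 := fun σ =>
    le_trans (Finset.sum_le_sum_of_subset_of_nonneg hSsub
      (fun i _ _ => sq_nonneg _)) (hcolAB σ)
  have hptw : ∀ σ : Fin N → Bool, ∀ i ∈ S, |dd i Bf σ| ≤ 5*β := by
    intro σ i hi
    have h1 : (dd i Bf σ)^2 ≤ (5*β)^2 :=
      le_trans (Finset.single_le_sum (f := fun i => (dd i Bf σ)^2)
        (fun i _ => sq_nonneg _) hi) (hcolS σ)
    rw [← Real.sqrt_sq_eq_abs]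
    calc Real.sqrt ((dd i Bf σ)^2) ≤ Real.sqrt ((5*β)^2) := Real.sqrt_le_sqrt h1
      _ = 5*β := Real.sqrt_sq (by positivity)
  -- reduce the goal
  have hEX : Efn w X = K * Efn w Bf := Efn_smul w K Bf
  rw [hgibbs, hgibbs]
  have hexp1 : (fun σ => Real.exp (-K * Bf σ)) = (fun σ => Real.exp (-(X σ))) := by
    funext σ; simp only [hXdef]; rw [neg_mul]
  rw [hexp1, show -K * Efn w Bf = -(Efn w X) by rw [hEX, neg_mul]]
  -- main case split
  by_cases hconst : ∀ σ τ : Fin N → Bool, X σ = X τ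
  · have h1 : (fun σ : Fin N → Bool => Real.exp (-(X σ)))
        = fun _ => Real.exp (-(X (fun _ => true))) := by
      funext σ; rw [hconst σ (fun _ => true)]
    have h2 : Efn w X = X (fun _ => true) := by
      rw [show X = fun _ => X (fun _ => true) from funext fun σ => hconst σ _]
      exact Efn_const hwpos _
    rw [h1, h2, Efn_const hwpos]
    nlinarith [Real.exp_pos (-(X (fun _ => true))), hε.1]
  · push_neg at hconst
    obtain ⟨σ₁, τ₁, hne1⟩ := hconst
    have hSne : S.Nonempty := by
      by_contra h
      rw [Finset.not_nonempty_iff_eq_empty] at h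
      exact hne1 (hdepX σ₁ τ₁ (fun i hi => absurd hi (by simp [h])))
    set a : ℝ := gap N g βp η A (B ∪ {j}) σA with hadef
    set Z : ℝ := ∑ σ : Fin N → Bool, w σ with hZdef
    have hZpos : 0 < Z := Zpos hwpos
    set c₀ : ℝ := S.inf' hSne (fun i => Finset.univ.inf' Finset.univ_nonempty
      (fun σ : Fin N → Bool =>
        (Real.cosh (cavity N g βp η A (B ∪ {j}) σA i σ))⁻¹^2 * w σ)) with hc0def
    have hc0pos : 0 < c₀ := by
      rw [hc0def, Finset.lt_inf'_iff]
      intro i _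
      rw [Finset.lt_inf'_iff]
      intro σ _
      have hcosh : 0 < Real.cosh (cavity N g βp η A (B ∪ {j}) σA i σ) := Real.cosh_pos _
      positivity
    have hc0le : ∀ i ∈ S, ∀ σ : Fin N → Bool,
        c₀ ≤ (Real.cosh (cavity N g βp η A (B ∪ {j}) σA i σ))⁻¹^2 * w σ := by
      intro i hi σ
      exact le_trans (Finset.inf'_le _ hi) (Finset.inf'_le _ (Finset.mem_univ σ))
    have hDeq : ∀ f' : (Fin N → Bool) → ℝ, Dform N g βp η A (B ∪ {j}) σA f'
        = ∑ i ∈ S, Efn w (fun σ =>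
            (Real.cosh (cavity N g βp η A (B ∪ {j}) σA i σ))⁻¹^2 * dd i f' σ^2) :=
      fun f' => rfl
    -- generic lower bound for Dform
    have hDlow : ∀ f' : (Fin N → Bool) → ℝ,
        c₀ * (∑ i ∈ S, ∑ σ : Fin N → Bool, (dd i f' σ)^2) / Z
          ≤ Dform N g βp η A (B ∪ {j}) σA f' := by
      intro f'
      rw [hDeq f']
      have h1 : ∀ i ∈ S, (c₀ * ∑ σ : Fin N → Bool, (dd i f' σ)^2) / Z
          ≤ Efn w (fun σ =>
            (Real.cosh (cavity N g βp η A (B ∪ {j}) σA i σ))⁻¹^2 * dd i f' σ^2) := by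
        intro i hi
        unfold Efn
        rw [← hZdef]
        apply (div_le_div_iff_of_pos_right hZpos).mpr
        rw [Finset.mul_sum]
        apply Finset.sum_le_sum
        intro σ _
        calc c₀ * (dd i f' σ)^2
            ≤ ((Real.cosh (cavity N g βp η A (B ∪ {j}) σA i σ))⁻¹^2 * w σ) * (dd i f' σ)^2 :=
              mul_le_mul_of_nonneg_right (hc0le i hi σ) (sq_nonneg _)
          _ = (Real.cosh (cavity N g βp η A (B ∪ {j}) σA i σ))⁻¹^2 * dd i f' σ^2 * w σ := by
              ring
      calc c₀ * (∑ i ∈ S, ∑ σ : Fin N → Bool, (dd i f' σ)^2) / Z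
          = ∑ i ∈ S, (c₀ * ∑ σ : Fin N → Bool, (dd i f' σ)^2) / Z := by
            rw [Finset.mul_sum, Finset.sum_div]
        _ ≤ _ := Finset.sum_le_sum h1
    -- nonconstancy gives positive Dirichlet energy
    have hQpos : ∀ f' : (Fin N → Bool) → ℝ,
        (∀ σ τ : Fin N → Bool, (∀ i ∈ S, σ i = τ i) → f' σ = f' τ) →
        (∃ σ τ, f' σ ≠ f' τ) →
        0 < ∑ i ∈ S, ∑ σ : Fin N → Bool, (dd i f' σ)^2 := by
      intro f' hdep' hnc'
      obtain ⟨σ', τ', hne'⟩ := hnc'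
      rcases (show (0:ℝ) ≤ ∑ i ∈ S, ∑ σ : Fin N → Bool, (dd i f' σ)^2 by positivity).lt_or_eq
        with h | h
      · exact h
      exfalso
      have hz : ∀ i ∈ S, ∀ ρ, |dd i f' ρ| ≤ (0:ℝ) := by
        intro i hi ρ
        have h1 : ∑ σ : Fin N → Bool, (dd i f' σ)^2 = 0 := by
          have := (Finset.sum_eq_zero_iff_of_nonneg
            (fun i (_ : i ∈ S) => Finset.sum_nonneg (fun σ _ => sq_nonneg (dd i f' σ)))).mp
            h.symm i hi
          exact this
        have h2 : (dd i f' ρ)^2 = 0 :=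
          (Finset.sum_eq_zero_iff_of_nonneg (fun σ _ => sq_nonneg _)).mp h1 ρ (Finset.mem_univ ρ)
        rw [abs_nonpos_iff]
        exact pow_eq_zero_iff (n := 2) (by norm_num) |>.mp h2
      set τ'' : Fin N → Bool := fun i => if i ∈ S then τ' i else σ' i with hτ''
      have h2 := tele f' S (fun _ => 0) hz S le_rfl σ' τ''
        (fun i hi => by simp only [hτ'']; rw [if_neg hi])
      simp only [mul_zero, Finset.sum_const_zero] at h2
      have h3 : f' σ' = f' τ'' := by
        have := abs_nonpos_iff.mp h2
        linarith [sub_eq_zero.mp this]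
      have h4 : f' τ'' = f' τ' :=
        hdep' τ'' τ' (fun i hi => by simp only [hτ'']; rw [if_pos hi])
      exact hne' (h3.trans h4)
    -- upper bound for the variance of a function of the free spins
    have hVup : ∀ f' : (Fin N → Bool) → ℝ,
        (∀ σ τ : Fin N → Bool, (∀ i ∈ S, σ i = τ i) → f' σ = f' τ) →
        Efn w (fun σ => f' σ * f' σ) - Efn w f' * Efn w f'
          ≤ 4*(N:ℝ)^2 * (∑ i ∈ S, ∑ σ : Fin N → Bool, (dd i f' σ)^2) := by
      intro f' hdep'
      set Q : ℝ := ∑ i ∈ S, ∑ σ : Fin N → Bool, (dd i f' σ)^2 with hQdef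
      have hQ0 : 0 ≤ Q := by positivity
      have hb : ∀ i ∈ S, ∀ ρ, |dd i f' ρ| ≤ Real.sqrt Q := by
        intro i hi ρ
        have h1 : (dd i f' ρ)^2 ≤ Q := by
          calc (dd i f' ρ)^2
              ≤ ∑ σ : Fin N → Bool, (dd i f' σ)^2 :=
                Finset.single_le_sum (f := fun σ => (dd i f' σ)^2)
                  (fun σ _ => sq_nonneg _) (Finset.mem_univ ρ)
            _ ≤ Q := Finset.single_le_sum
                (f := fun i => ∑ σ : Fin N → Bool, (dd i f' σ)^2)
                (fun i _ => Finset.sum_nonneg fun σ _ => sq_nonneg _) hi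
        rw [← Real.sqrt_sq_eq_abs]
        exact Real.sqrt_le_sqrt h1
      have hbound : ∀ σ, (f' σ - f' (fun _ => true))^2 ≤ 4*(N:ℝ)^2*Q := by
        intro σ
        set σs : Fin N → Bool := fun i => if i ∈ S then σ i else true with hσs
        have e1 : f' σ = f' σs := hdep' σ σs (fun i hi => by simp only [hσs]; rw [if_pos hi])
        have h3 : |f' σs - f' (fun _ => true)| ≤ ∑ i ∈ S, 2 * Real.sqrt Q :=
          tele f' S (fun _ => Real.sqrt Q) hb S le_rfl σs (fun _ => true)
            (fun i hi => by simp only [hσs]; rw [if_neg hi])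
        rw [Finset.sum_const, nsmul_eq_mul] at h3
        have hcard : (S.card : ℝ) ≤ (N : ℝ) := by
          have h : S.card ≤ N := le_trans (Finset.card_le_univ S) (by simp)
          exact_mod_cast h
        have h4 : |f' σs - f' (fun _ => true)| ≤ 2*(N:ℝ)*Real.sqrt Q := by
          calc |f' σs - f' (fun _ => true)| ≤ (S.card : ℝ) * (2 * Real.sqrt Q) := h3
            _ ≤ (N:ℝ) * (2*Real.sqrt Q) :=
              mul_le_mul_of_nonneg_right hcard (by positivity)
            _ = 2*(N:ℝ)*Real.sqrt Q := by ring
        calc (f' σ - f' (fun _ => true))^2 = |f' σs - f' (fun _ => true)|^2 := by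
              rw [e1, sq_abs]
          _ ≤ (2*(N:ℝ)*Real.sqrt Q)^2 := pow_le_pow_left₀ (abs_nonneg _) h4 2
          _ = 4*(N:ℝ)^2 * (Real.sqrt Q)^2 := by ring
          _ = 4*(N:ℝ)^2 * Q := by rw [Real.sq_sqrt hQ0]
      have h5 := Efn_var_le hwpos f' (f' (fun _ => true))
      rw [pow_two] at h5
      calc Efn w (fun σ => f' σ * f' σ) - Efn w f' * Efn w f'
          ≤ Efn w (fun σ => (f' σ - f' (fun _ => true))^2) := h5
        _ ≤ Efn w (fun _ => 4*(N:ℝ)^2*Q) := Efn_mono hwpos hbound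
        _ = 4*(N:ℝ)^2*Q := Efn_const hwpos _
    -- gcov unfolds
    have hgcov : ∀ f' : (Fin N → Bool) → ℝ, gcov N g βp η A (B ∪ {j}) σA f' f'
        = Efn w (fun σ => f' σ * f' σ) - Efn w f' * Efn w f' := fun f' => rfl
    -- boundedness of the gap set
    have hBdd : BddAbove {r : ℝ | ∃ f : (Fin N → Bool) → ℝ,
        dependsOn f ((A ∪ (B ∪ {j}))ᶜ) ∧ (∃ σ τ, f σ ≠ f τ) ∧
        r = gcov N g βp η A (B ∪ {j}) σA f f / Dform N g βp η A (B ∪ {j}) σA f} := by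
      refine ⟨4*(N:ℝ)^2 * Z / c₀, ?_⟩
      rintro r ⟨f', hdep', hnc', rfl⟩
      have hdep'' : ∀ σ τ : Fin N → Bool, (∀ i ∈ S, σ i = τ i) → f' σ = f' τ :=
        fun σ τ h => hdep' σ τ h
      set Q : ℝ := ∑ i ∈ S, ∑ σ : Fin N → Bool, (dd i f' σ)^2 with hQdef
      have hQp : 0 < Q := hQpos f' hdep'' hnc'
      have hD := hDlow f'
      have hDpos' : 0 < Dform N g βp η A (B ∪ {j}) σA f' :=
        lt_of_lt_of_le (div_pos (mul_pos hc0pos hQp) hZpos) hD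
      have hV := hVup f' hdep''
      rw [hgcov f']
      calc (Efn w (fun σ => f' σ * f' σ) - Efn w f' * Efn w f')
            / Dform N g βp η A (B ∪ {j}) σA f'
          ≤ (4*(N:ℝ)^2*Q) / Dform N g βp η A (B ∪ {j}) σA f' :=
            (div_le_div_iff_of_pos_right hDpos').mpr hV
        _ ≤ (4*(N:ℝ)^2*Q) / (c₀ * Q / Z) :=
            div_le_div_of_nonneg_left (by positivity)
              (div_pos (mul_pos hc0pos hQp) hZpos) hD
        _ = 4*(N:ℝ)^2 * Z / c₀ := by
            field_simp
    have hgapeq : gap N g βp η A (B ∪ {j}) σA = sSup {r : ℝ | ∃ f : (Fin N → Bool) → ℝ,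
        dependsOn f ((A ∪ (B ∪ {j}))ᶜ) ∧ (∃ σ τ, f σ ≠ f τ) ∧
        r = gcov N g βp η A (B ∪ {j}) σA f f / Dform N g βp η A (B ∪ {j}) σA f} := rfl
    -- the key gap inequality
    have key : ∀ f' : (Fin N → Bool) → ℝ, dependsOn f' ((A ∪ (B ∪ {j}))ᶜ) →
        (∃ σ τ, f' σ ≠ f' τ) →
        gcov N g βp η A (B ∪ {j}) σA f' f' / Dform N g βp η A (B ∪ {j}) σA f' ≤ a := by
      intro f' h1 h2
      rw [hadef, hgapeq]
      exact le_csSup hBdd ⟨f', h1, h2, rfl⟩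
    -- nonnegativity of a
    have ha0 : 0 ≤ a := by
      rw [hadef, hgapeq]
      apply Real.sSup_nonneg
      rintro r ⟨f', _, _, rfl⟩
      apply div_nonneg
      · rw [hgcov f']
        have := Efn_var_nonneg hwpos f'
        rw [pow_two] at this
        linarith
      · rw [hDeq f']
        apply Finset.sum_nonneg
        intro i _
        apply Efn_nonneg hwpos
        intro σ
        positivity
    -- apply the core lemma
    apply core w X hwpos ε hε.1 hε.2
    intro s hs hs1
    set f : (Fin N → Bool) → ℝ := fun σ => Real.exp (-(s/2 * X σ)) with hfdef
    have hfpos : ∀ σ, 0 < f σ := fun σ => Real.exp_pos _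
    have hfdep : ∀ σ τ : Fin N → Bool, (∀ i ∈ S, σ i = τ i) → f σ = f τ := by
      intro σ τ h; simp only [hfdef]; rw [hdepX σ τ h]
    have hfnc : ∃ σ τ, f σ ≠ f τ := by
      refine ⟨σ₁, τ₁, fun hh => hne1 ?_⟩
      simp only [hfdef] at hh
      have h1 := Real.exp_eq_exp.mp hh
      have h3 : s/2 * X σ₁ = s/2 * X τ₁ := neg_inj.mp h1
      exact mul_left_cancel₀ (ne_of_gt (by positivity : (0:ℝ) < s/2)) h3
    have hQp := hQpos f hfdep hfnc
    have hDpos : 0 < Dform N g βp η A (B ∪ {j}) σA f :=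
      lt_of_lt_of_le (div_pos (mul_pos hc0pos hQp) hZpos) (hDlow f)
    have hrle := key f (fun σ τ h => hfdep σ τ h) hfnc
    have hVle : gcov N g βp η A (B ∪ {j}) σA f f
        ≤ a * Dform N g βp η A (B ∪ {j}) σA f := (div_le_iff₀ hDpos).mp hrle
    -- upper bound on the Dirichlet form
    set G : ℝ := Efn w (fun σ => Real.exp (-(s * X σ))) with hGdef
    have hG0 : 0 ≤ G := (Efn_pos hwpos (fun σ => Real.exp_pos _)).le
    have hff : ∀ σ, f σ * f σ = Real.exp (-(s * X σ)) := by
      intro σ; simp only [hfdef]; rw [← Real.exp_add]; congr 1; ring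
    have hDup : Dform N g βp η A (B ∪ {j}) σA f
        ≤ (25*β^2*K^2*Real.exp (200*β)/4) * s^2 * G := by
      rw [hDeq f]
      have hstep1 : ∀ i ∈ S, Efn w (fun σ =>
          (Real.cosh (cavity N g βp η A (B ∪ {j}) σA i σ))⁻¹^2 * dd i f σ^2)
          ≤ Efn w (fun σ => dd i f σ^2) := by
        intro i _
        apply Efn_mono hwpos
        intro σ
        have hc1 : (Real.cosh (cavity N g βp η A (B ∪ {j}) σA i σ))⁻¹ ≤ 1 := by
          rw [inv_le_one_iff₀]
          right
          exact Real.one_le_cosh _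
        have hc0' : 0 ≤ (Real.cosh (cavity N g βp η A (B ∪ {j}) σA i σ))⁻¹ := by
          positivity
        calc (Real.cosh (cavity N g βp η A (B ∪ {j}) σA i σ))⁻¹^2 * dd i f σ^2
            ≤ 1 * dd i f σ^2 :=
              mul_le_mul_of_nonneg_right (pow_le_one₀ hc0' hc1) (sq_nonneg _)
          _ = dd i f σ^2 := one_mul _
      have hpt : ∀ σ, ∑ i ∈ S, dd i f σ^2
          ≤ (25*β^2*K^2*Real.exp (200*β)/4) * s^2 * Real.exp (-(s * X σ)) := by
        intro σ
        have hterm : ∀ i ∈ S, dd i f σ^2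
            ≤ (f σ * f σ) * (s^2*K^2*(dd i Bf σ)^2) * Real.exp (200*β) / 4 := by
          intro i hi
          have hBflip : Bf (flipAt i σ) = Bf σ - 2 * dd i Bf σ := by
            unfold dd; ring
          have hflip : f (flipAt i σ) = f σ * Real.exp (s*K*dd i Bf σ) := by
            simp only [hfdef, hXdef]
            rw [← Real.exp_add]
            congr 1
            rw [hBflip]
            ring
          have hdd : dd i f σ = f σ * (1 - Real.exp (s*K*dd i Bf σ)) / 2 := by
            have e0 : dd i f σ = (f σ - f (flipAt i σ))/2 := rfl
            rw [e0, hflip]; ring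
          set u : ℝ := s*K*dd i Bf σ with hudef
          have huB : |u| ≤ 100*β := by
            rw [hudef, abs_mul, abs_mul, abs_of_pos hs]
            have h1 : |K| ≤ 20 := abs_le.mpr ⟨hK.1, hK.2⟩
            have h2 : |dd i Bf σ| ≤ 5*β := hptw σ i hi
            have h3 : 0 ≤ |K| := abs_nonneg K
            have h4 : 0 ≤ |dd i Bf σ| := abs_nonneg (dd i Bf σ)
            have e1 : s * |K| * |dd i Bf σ| ≤ |K| * |dd i Bf σ| := by
              have := mul_le_mul_of_nonneg_right
                (mul_le_mul_of_nonneg_right hs1 h3) h4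
              simpa using this
            have e2 : |K| * |dd i Bf σ| ≤ 20 * |dd i Bf σ| :=
              mul_le_mul_of_nonneg_right h1 h4
            have e3 : 20 * |dd i Bf σ| ≤ 20 * (5*β) := by linarith
            linarith
          have habs : |1 - Real.exp u| ≤ |u| * Real.exp |u| := one_sub_exp_abs u
          have hq : (1 - Real.exp u)^2 ≤ u^2 * Real.exp (200*β) := by
            have h1 : (1 - Real.exp u)^2 = |1 - Real.exp u|^2 := (sq_abs _).symm
            have h2 : |1 - Real.exp u|^2 ≤ (|u| * Real.exp |u|)^2 :=
              pow_le_pow_left₀ (abs_nonneg _) habs 2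
            have h3 : (|u| * Real.exp |u|)^2 = u^2 * Real.exp (2*|u|) := by
              rw [mul_pow, sq_abs, pow_two (Real.exp |u|), ← Real.exp_add, two_mul]
            have h4 : Real.exp (2*|u|) ≤ Real.exp (200*β) :=
              Real.exp_le_exp.mpr (by linarith)
            have h5 : u^2 * Real.exp (2*|u|) ≤ u^2 * Real.exp (200*β) :=
              mul_le_mul_of_nonneg_left h4 (sq_nonneg _)
            calc (1 - Real.exp u)^2 = |1 - Real.exp u|^2 := h1
              _ ≤ (|u| * Real.exp |u|)^2 := h2
              _ = u^2 * Real.exp (2*|u|) := h3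
              _ ≤ u^2 * Real.exp (200*β) := h5
          have hu2 : u^2 = s^2*K^2*(dd i Bf σ)^2 := by rw [hudef]; ring
          calc dd i f σ^2 = (f σ)^2 * (1 - Real.exp u)^2 / 4 := by rw [hdd]; ring
            _ ≤ (f σ)^2 * (u^2 * Real.exp (200*β)) / 4 := by
                have := mul_le_mul_of_nonneg_left hq (sq_nonneg (f σ))
                linarith
            _ = (f σ * f σ) * (s^2*K^2*(dd i Bf σ)^2) * Real.exp (200*β) / 4 := by
                rw [hu2]; ring
        calc ∑ i ∈ S, dd i f σ^2
            ≤ ∑ i ∈ S, (f σ * f σ) * (s^2*K^2*(dd i Bf σ)^2) * Real.exp (200*β) / 4 :=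
              Finset.sum_le_sum hterm
          _ = ((f σ * f σ) * s^2*K^2*Real.exp (200*β)/4) * ∑ i ∈ S, (dd i Bf σ)^2 := by
              rw [Finset.mul_sum]
              apply Finset.sum_congr rfl
              intros; ring
          _ ≤ ((f σ * f σ) * s^2*K^2*Real.exp (200*β)/4) * (5*β)^2 := by
              apply mul_le_mul_of_nonneg_left (hcolS σ)
              have := (hfpos σ).le
              positivity
          _ = (25*β^2*K^2*Real.exp (200*β)/4) * s^2 * (f σ * f σ) := by ring
          _ = (25*β^2*K^2*Real.exp (200*β)/4) * s^2 * Real.exp (-(s * X σ)) := by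
              rw [hff σ]
      calc ∑ i ∈ S, Efn w (fun σ =>
            (Real.cosh (cavity N g βp η A (B ∪ {j}) σA i σ))⁻¹^2 * dd i f σ^2)
          ≤ ∑ i ∈ S, Efn w (fun σ => dd i f σ^2) := Finset.sum_le_sum hstep1
        _ = Efn w (fun σ => ∑ i ∈ S, dd i f σ^2) := (Efn_sum hwpos S _).symm
        _ ≤ Efn w (fun σ => ((25*β^2*K^2*Real.exp (200*β)/4) * s^2)
            * Real.exp (-(s * X σ))) := by
            apply Efn_mono hwpos
            intro σ
            calc ∑ i ∈ S, dd i f σ^2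
                ≤ (25*β^2*K^2*Real.exp (200*β)/4) * s^2 * Real.exp (-(s * X σ)) := hpt σ
              _ = ((25*β^2*K^2*Real.exp (200*β)/4) * s^2) * Real.exp (-(s * X σ)) := by ring
        _ = ((25*β^2*K^2*Real.exp (200*β)/4) * s^2) * G := Efn_smul w _ _
        _ = (25*β^2*K^2*Real.exp (200*β)/4) * s^2 * G := by ring
    -- constants comparison
    have hcst : a * (25*β^2*K^2*Real.exp (200*β)/4) ≤ ε/100 := by
      have hK2 : K^2 ≤ 400 := by
        rcases hK with ⟨h1, h2⟩
        nlinarith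
      have hCb : Cbeta β = 10^6 * β^2 * Real.exp (1000*β) := by
        unfold Cbeta
        rw [mul_pow]
        norm_num
      have he : Real.exp (200*β) ≤ Real.exp (1000*β) := Real.exp_le_exp.mpr (by linarith)
      have h1 : 25*β^2*K^2*Real.exp (200*β)/4 ≤ Cbeta β/100 := by
        rw [hCb]
        have hb2 : 0 ≤ β^2 := sq_nonneg β
        nlinarith [Real.exp_pos (200*β), mul_nonneg hb2 (Real.exp_pos (200*β)).le,
          mul_le_mul_of_nonneg_left he hb2]
      calc a * (25*β^2*K^2*Real.exp (200*β)/4) ≤ a * (Cbeta β/100) :=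
          mul_le_mul_of_nonneg_left h1 ha0
        _ ≤ ε/100 := by linarith [hgap]
    -- conclude
    have hVeq : Efn w (fun x => Real.exp (-(s * X x)))
        - (Efn w (fun x => Real.exp (-(s/2 * X x))))^2
        = gcov N g βp η A (B ∪ {j}) σA f f := by
      rw [hgcov f, pow_two]
      congr 1
      congr 1
      funext σ
      rw [hff σ]
    rw [hVeq]
    calc gcov N g βp η A (B ∪ {j}) σA f f
        ≤ a * Dform N g βp η A (B ∪ {j}) σA f := hVle
      _ ≤ a * ((25*β^2*K^2*Real.exp (200*β)/4) * s^2 * G) :=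
          mul_le_mul_of_nonneg_left hDup ha0
      _ = (a * (25*β^2*K^2*Real.exp (200*β)/4)) * s^2 * G := by ring
      _ ≤ ε/100 * s^2 * G := by
          refine mul_le_mul_of_nonneg_right ?_ hG0
          exact mul_le_mul_of_nonneg_right hcst (sq_nonneg s)
      _ = ε/100 * s^2 * Efn w (fun x => Real.exp (-(s * X x))) := by rw [hGdef]
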